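/- For all positive integers m, s and all complex numbers x, y, z, the following identity of formal power series in ℂ⟦t⟧ holds: Σ_{n≥0} (_LH_n^{(m,s)}(x,y,z|q)/[n]_q!) t^n = e_q(yt) · E_{q^s}(z t^s) · ε_q^m(-x t^m). -/

import Mathlib

/-- The q-analogue of a natural number: [n]_q = Σ_{k=1}^n q^{k-1}. -/
noncomputable def qnat (q : ℝ) (n : ℕ) : ℝ := ∑ k ∈ Finset.range n, q ^ k

/-- The q-factorial [n]_q! = Π_{k=1}^n [k]_q, with [0]_q! = 1. -/
noncomputable def qfact (q : ℝ) (n : ℕ) : ℝ := ∏ k ∈ Finset.range n, qnat q (k + 1)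

/-- The Gaussian q-binomial coefficient [n choose k]_q. -/
noncomputable def qbinom (q : ℝ) (n k : ℕ) : ℝ := qfact q n / (qfact q k * qfact q (n - k))

/-- JHC q-subtraction power (x ⊖_q y)^n. -/
noncomputable def qsubPow (q : ℝ) (x y : ℂ) (n : ℕ) : ℂ :=
  ∑ k ∈ Finset.range (n + 1),
    (qbinom q n k : ℂ) * (q : ℂ) ^ (k * (k - 1) / 2) * x ^ (n - k) * (-y) ^ k

/-- JHC q-addition power (x ⊕_q y)^n. -/
noncomputable def qaddPow (q : ℝ) (x y : ℂ) (n : ℕ) : ℂ :=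
  ∑ k ∈ Finset.range (n + 1),
    (qbinom q n k : ℂ) * (q : ℂ) ^ (k * (k - 1) / 2) * x ^ (n - k) * y ^ k

/-- The q-deformed 2D Laguerre polynomial _mL_n(x,y|q). -/
noncomputable def qLag (q : ℝ) (m : ℕ) (x y : ℂ) (n : ℕ) : ℂ :=
  (qfact q n : ℂ) * ∑ k ∈ Finset.range (n / m + 1),
    (q : ℂ) ^ (m * (k * (k - 1) / 2)) * x ^ k * y ^ (n - m * k) /
      ((qfact (q ^ m) k : ℂ) ^ 2 * (qfact q (n - m * k) : ℂ))

/-- The q-deformed Laguerre-Gould-Hopper polynomial _LH_n^{(m,s)}(x,y,z|q). -/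
noncomputable def qLGH (q : ℝ) (m s : ℕ) (x y z : ℂ) (n : ℕ) : ℂ :=
  (qfact q n : ℂ) * ∑ k ∈ Finset.range (n / s + 1),
    (q : ℂ) ^ (s * (k * (k - 1) / 2)) * z ^ k * qLag q m x y (n - s * k) /
      ((qfact (q ^ s) k : ℂ) * (qfact q (n - s * k) : ℂ))

/-- The two-variable q-Gould-Hopper kernel G_n^s(u,v). -/
noncomputable def qGH (q : ℝ) (s : ℕ) (u v : ℂ) (n : ℕ) : ℂ :=
  (qfact q n : ℂ) * ∑ k ∈ Finset.range (n / s + 1),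
    (q : ℂ) ^ (s * (k * (k - 1) / 2)) * u ^ (n - s * k) * v ^ k /
      ((qfact q (n - s * k) : ℂ) * (qfact (q ^ s) k : ℂ))

/-- The kernel G_n^s(ξ ⊖_q y, ζ ⊖_q z), with monomial powers replaced by
JHC q-subtraction powers. -/
noncomputable def qGHsub (q : ℝ) (s : ℕ) (ξ y ζ z : ℂ) (n : ℕ) : ℂ :=
  (qfact q n : ℂ) * ∑ k ∈ Finset.range (n / s + 1),
    (q : ℂ) ^ (s * (k * (k - 1) / 2)) * qsubPow q ξ y (n - s * k) * qsubPow q ζ z k /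
      ((qfact q (n - s * k) : ℂ) * (qfact (q ^ s) k : ℂ))

/-- The q-exponential series e_q(yt) = Σ_{n≥0} y^n t^n/[n]_q! in ℂ⟦t⟧. -/
noncomputable def eqSeries (q : ℝ) (y : ℂ) : PowerSeries ℂ :=
  PowerSeries.mk fun n => y ^ n / (qfact q n : ℂ)

/-- The series E_{q^s}(z t^s) = Σ_{n≥0} q^{s n(n-1)/2} z^n t^{sn}/[n]_{q^s}! in ℂ⟦t⟧. -/
noncomputable def EqSeries (q : ℝ) (s : ℕ) (z : ℂ) : PowerSeries ℂ :=
  PowerSeries.mk fun n =>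
    if s ∣ n then
      (q : ℂ) ^ (s * ((n / s) * (n / s - 1) / 2)) * z ^ (n / s) /
        (qfact (q ^ s) (n / s) : ℂ)
    else 0

/-- The (q,m)-deformed Bessel-Tricomi series
ε_q^m(-x t^m) = Σ_{k≥0} q^{m k(k-1)/2} x^k t^{mk}/([k]_{q^m}!)^2 in ℂ⟦t⟧. -/
noncomputable def besselTricomiSeries (q : ℝ) (m : ℕ) (x : ℂ) : PowerSeries ℂ :=
  PowerSeries.mk fun n =>
    if m ∣ n then
      (q : ℂ) ^ (m * ((n / m) * (n / m - 1) / 2)) * x ^ (n / m) /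
        (qfact (q ^ m) (n / m) : ℂ) ^ 2
    else 0


lemma qfact_pos {q : ℝ} (hq : 0 < q) (n : ℕ) : 0 < qfact q n := by
  apply Finset.prod_pos
  intro i _
  apply Finset.sum_pos (fun j _ => pow_pos hq j) ⟨0, Finset.mem_range.mpr (Nat.succ_pos i)⟩

lemma qfact_ne_zero {q : ℝ} (hq : 0 < q) (n : ℕ) : (qfact q n : ℂ) ≠ 0 :=
  Complex.ofReal_ne_zero.mpr (qfact_pos hq n).ne'

lemma sum_if_dvd (s : ℕ) (hs : 0 < s) (n : ℕ) (g : ℕ → ℂ) :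
    (∑ b ∈ Finset.range (n+1), if s ∣ b then g b else 0)
      = ∑ k ∈ Finset.range (n/s + 1), g (s*k) := by
  rw [← Finset.sum_filter]
  apply Finset.sum_nbij' (fun b => b / s) (fun k => s * k)
  · intro a ha
    simp only [Finset.mem_filter, Finset.mem_range] at ha
    exact Finset.mem_range.mpr (Nat.lt_succ_of_le (Nat.div_le_div_right (Nat.lt_succ_iff.mp ha.1)))
  · intro k hk
    simp only [Finset.mem_range] at hk
    simp only [Finset.mem_filter, Finset.mem_range]
    exact ⟨Nat.lt_succ_of_le ((Nat.le_div_iff_mul_le hs).mp (Nat.lt_succ_iff.mp hk) |>.trans_eq'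
      (mul_comm k s)), ⟨k, rfl⟩⟩
  · intro a ha
    simp only [Finset.mem_filter] at ha
    exact Nat.mul_div_cancel' ha.2
  · intro k _
    exact Nat.mul_div_cancel_left k hs
  · intro a ha
    simp only [Finset.mem_filter] at ha
    rw [Nat.mul_div_cancel' ha.2]

lemma lemA (q : ℝ) (hq0 : 0 < q) (m : ℕ) (hm : 0 < m) (x y : ℂ) :
    (PowerSeries.mk fun n => qLag q m x y n / (qfact q n : ℂ)) =
      eqSeries q y * besselTricomiSeries q m x := by
  ext n
  rw [mul_comm, PowerSeries.coeff_mk, PowerSeries.coeff_mul,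
    Finset.Nat.sum_antidiagonal_eq_sum_range_succ_mk]
  simp only [besselTricomiSeries, eqSeries, PowerSeries.coeff_mk, ite_mul, zero_mul]
  rw [sum_if_dvd m hm n]
  rw [qLag, mul_comm ((qfact q n : ℝ) : ℂ), mul_div_assoc,
    div_self (qfact_ne_zero hq0 n), mul_one]
  apply Finset.sum_congr rfl
  intro k _
  rw [Nat.mul_div_cancel_left k hm]
  ring

lemma lemB (q : ℝ) (hq0 : 0 < q) (m s : ℕ) (hs : 0 < s) (x y z : ℂ) :
    (PowerSeries.mk fun n => qLGH q m s x y z n / (qfact q n : ℂ)) =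
      (PowerSeries.mk fun n => qLag q m x y n / (qfact q n : ℂ)) * EqSeries q s z := by
  ext n
  rw [mul_comm, PowerSeries.coeff_mk, PowerSeries.coeff_mul,
    Finset.Nat.sum_antidiagonal_eq_sum_range_succ_mk]
  simp only [EqSeries, PowerSeries.coeff_mk, ite_mul, zero_mul]
  rw [sum_if_dvd s hs n]
  rw [qLGH, mul_comm ((qfact q n : ℝ) : ℂ), mul_div_assoc,
    div_self (qfact_ne_zero hq0 n), mul_one]
  apply Finset.sum_congr rfl
  intro k _
  rw [Nat.mul_div_cancel_left k hs]
  ring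

theorem generating_function_qLGH (q : ℝ) (hq0 : 0 < q) (hq1 : q < 1)
    (m s : ℕ) (hm : 0 < m) (hs : 0 < s) (x y z : ℂ) :
    (PowerSeries.mk fun n => qLGH q m s x y z n / (qfact q n : ℂ)) =
      eqSeries q y * EqSeries q s z * besselTricomiSeries q m x := by
  rw [lemB q hq0 m s hs x y z, lemA q hq0 m hm x y]
  ring
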